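/- Let x < y be real numbers, let f : [x,y] → ℝ be continuous and convex, and let F : [x,y] → ℝ be an antiderivative of f. Then ((1/3)F(x) − (8/3)F((3x+y)/4) + (8/3)F((x+3y)/4) − (1/3)F(y))/(y−x) ≤ (1/(y−x)) ∫ₓʸ f(t) dt. -/

import Mathlib

/-- Example 1: `((1/3)F(x) - (8/3)F((3x+y)/4) + (8/3)F((x+3y)/4) - (1/3)F(y))/(y-x)
≤ (1/(y-x)) ∫ₓʸ f` for every continuous convex `f` and its antiderivative `F`. -/
theorem stmt_14 (x y : ℝ) (hxy : x < y) (f F : ℝ → ℝ)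
    (hf_cont : ContinuousOn f (Set.Icc x y)) (hf_conv : ConvexOn ℝ (Set.Icc x y) f)
    (hF : ∀ t ∈ Set.Icc x y, HasDerivWithinAt F (f t) (Set.Icc x y) t) :
    ((1 / 3) * F x - (8 / 3) * F ((3 * x + y) / 4) + (8 / 3) * F ((x + 3 * y) / 4)
        - (1 / 3) * F y) / (y - x)
      ≤ (1 / (y - x)) * ∫ t in x..y, f t := by
  set m1 : ℝ := (3 * x + y) / 4 with hm1
  set m2 : ℝ := (x + 3 * y) / 4 with hm2
  have hd : (0:ℝ) < y - x := by linarith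
  have hxm1 : x < m1 := by rw [hm1]; linarith
  have hm1m2 : m1 < m2 := by rw [hm1, hm2]; linarith
  have hm2y : m2 < y := by rw [hm2]; linarith
  have hm1mem : m1 ∈ Set.Icc x y := ⟨le_of_lt hxm1, by linarith⟩
  have hm2mem : m2 ∈ Set.Icc x y := ⟨by linarith, le_of_lt hm2y⟩
  -- integrability of f on subintervals
  have hint : ∀ a b : ℝ, a ∈ Set.Icc x y → b ∈ Set.Icc x y →
      IntervalIntegrable f MeasureTheory.volume a b := by
    intro a b ha hb
    exact (hf_cont.mono (Set.uIcc_subset_Icc ha hb)).intervalIntegrable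
  have hxmem : x ∈ Set.Icc x y := ⟨le_refl _, le_of_lt hxy⟩
  have hymem : y ∈ Set.Icc x y := ⟨le_of_lt hxy, le_refl _⟩
  -- FTC on subintervals
  have hFTC : ∀ a b : ℝ, a ∈ Set.Icc x y → b ∈ Set.Icc x y → a ≤ b →
      ∫ t in a..b, f t = F b - F a := by
    intro a b ha hb hab
    apply intervalIntegral.integral_eq_sub_of_hasDeriv_right_of_le hab
    · intro t ht
      have htm : t ∈ Set.Icc x y := ⟨le_trans ha.1 ht.1, le_trans ht.2 hb.2⟩
      exact ((hF t htm).continuousWithinAt).mono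
        (Set.Icc_subset_Icc ha.1 hb.2)
    · intro t ht
      have htm : t ∈ Set.Ioo x y := ⟨lt_of_le_of_lt ha.1 ht.1, lt_of_lt_of_le ht.2 hb.2⟩
      have := (hF t (Set.mem_Icc_of_Ioo htm)).hasDerivAt
        (Icc_mem_nhds htm.1 htm.2)
      exact this.hasDerivWithinAt
    · exact hint a b ha hb
  -- the secant line through (m1, f m1) and (m2, f m2)
  set s : ℝ := (f m2 - f m1) / (m2 - m1) with hs
  set L : ℝ → ℝ := fun t => s * t + (f m1 - s * m1) with hL
  have hm2m1 : m2 - m1 = (y - x) / 2 := by rw [hm1, hm2]; ring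
  have hLint : ∀ a b : ℝ, ∫ t in a..b, L t
      = s * ((b ^ 2 - a ^ 2) / 2) + (f m1 - s * m1) * (b - a) := by
    intro a b
    simp only [hL]
    rw [show (∫ t in a..b, (s * t + (f m1 - s * m1)))
        = (∫ t in a..b, s * t) + ∫ t in a..b, (f m1 - s * m1) from
      intervalIntegral.integral_add
        ((continuous_const.mul continuous_id).intervalIntegrable a b)
        intervalIntegrable_const,
      intervalIntegral.integral_const_mul, integral_id, intervalIntegral.integral_const,
      smul_eq_mul]
    ring
  -- pointwise bounds
  have hcomb : ∀ p q t : ℝ, p ∈ Set.Icc x y → q ∈ Set.Icc x y → p < q →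
      t ∈ Set.Icc p q → (q - p) * f t ≤ (q - t) * f p + (t - p) * f q := by
    intro p q t hp hq hpq ht
    have hqp : (0:ℝ) < q - p := by linarith
    have hne : q - p ≠ 0 := ne_of_gt hqp
    have ha : (0:ℝ) ≤ (q - t) / (q - p) := by
      apply div_nonneg <;> [linarith [ht.2]; linarith]
    have hb : (0:ℝ) ≤ (t - p) / (q - p) := by
      apply div_nonneg <;> [linarith [ht.1]; linarith]
    have hab : (q - t) / (q - p) + (t - p) / (q - p) = 1 := by
      field_simp
      ring
    have key := hf_conv.2 hp hq ha hb hab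
    simp only [smul_eq_mul] at key
    have ht' : (q - t) / (q - p) * p + (t - p) / (q - p) * q = t := by
      rw [div_mul_eq_mul_div, div_mul_eq_mul_div, ← add_div, div_eq_iff hne]
      ring
    rw [ht'] at key
    have e : (q - p) * ((q - t) / (q - p) * f p + (t - p) / (q - p) * f q)
        = (q - t) * f p + (t - p) * f q := by
      field_simp
    calc (q - p) * f t ≤ (q - p) * ((q - t) / (q - p) * f p + (t - p) / (q - p) * f q) :=
          mul_le_mul_of_nonneg_left key hqp.le
      _ = (q - t) * f p + (t - p) * f q := e
  have hmm : (0:ℝ) < m2 - m1 := by linarith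
  have hmid : ∀ t ∈ Set.Icc m1 m2, f t ≤ L t := by
    intro t ht
    have key := hcomb m1 m2 t hm1mem hm2mem hm1m2 ht
    simp only [hL]
    rw [← sub_nonneg]
    have e : s * t + (f m1 - s * m1) - f t
        = ((m2 - t) * f m1 + (t - m1) * f m2 - (m2 - m1) * f t) / (m2 - m1) := by
      rw [hs]; field_simp; ring
    rw [e]
    exact div_nonneg (by linarith) hmm.le
  have houter : ∀ t : ℝ, t ∈ Set.Icc x y → (t ≤ m1 ∨ m2 ≤ t) → L t ≤ f t := by
    intro t ht hcase
    simp only [hL]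
    rw [← sub_nonneg]
    have e : f t - (s * t + (f m1 - s * m1))
        = ((m2 - m1) * f t - (m2 - t) * f m1 - (t - m1) * f m2) / (m2 - m1) := by
      rw [hs]; field_simp; ring
    rw [e]
    apply div_nonneg _ hmm.le
    rcases hcase with h | h
    · have key := hcomb t m2 m1 ht hm2mem (by linarith) ⟨h, le_of_lt hm1m2⟩
      linarith
    · have key := hcomb m1 t m2 hm1mem ht (by linarith) ⟨le_of_lt hm1m2, h⟩
      linarith
  -- integral comparisons
  have hLcont : ∀ a b : ℝ, IntervalIntegrable L MeasureTheory.volume a b := by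
    intro a b
    exact ((continuous_const.mul continuous_id).add continuous_const).intervalIntegrable _ _
  have h1 : ∫ t in x..m1, L t ≤ ∫ t in x..m1, f t := by
    apply intervalIntegral.integral_mono_on (le_of_lt hxm1) (hLcont _ _) (hint _ _ hxmem hm1mem)
    intro t ht
    exact houter t ⟨ht.1, le_trans ht.2 hm1mem.2⟩ (Or.inl ht.2)
  have h2 : ∫ t in m1..m2, f t ≤ ∫ t in m1..m2, L t := by
    apply intervalIntegral.integral_mono_on (le_of_lt hm1m2) (hint _ _ hm1mem hm2mem) (hLcont _ _)
    exact hmid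
  have h3 : ∫ t in m2..y, L t ≤ ∫ t in m2..y, f t := by
    apply intervalIntegral.integral_mono_on (le_of_lt hm2y) (hLcont _ _) (hint _ _ hm2mem hymem)
    intro t ht
    exact houter t ⟨le_trans hm2mem.1 ht.1, ht.2⟩ (Or.inr ht.1)
  -- split the big integral
  have hsplit : ∫ t in x..y, f t
      = (∫ t in x..m1, f t) + (∫ t in m1..m2, f t) + (∫ t in m2..y, f t) := by
    rw [intervalIntegral.integral_add_adjacent_intervals (hint _ _ hxmem hm1mem)
      (hint _ _ hm1mem hm2mem),
      intervalIntegral.integral_add_adjacent_intervals (hint _ _ hxmem hm2mem)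
      (hint _ _ hm2mem hymem)]
  -- key inequality : middle integral ≤ sum of outer integrals
  have hkey : ∫ t in m1..m2, f t ≤ (∫ t in x..m1, f t) + (∫ t in m2..y, f t) := by
    have hLeq : ∫ t in m1..m2, L t = (∫ t in x..m1, L t) + (∫ t in m2..y, L t) := by
      rw [hLint, hLint, hLint, hm1, hm2]; ring
    linarith
  -- rewrite the F-differences as integrals
  have e1 : F y - F x = ∫ t in x..y, f t := (hFTC x y hxmem hymem (le_of_lt hxy)).symm
  have e2 : F m2 - F m1 = ∫ t in m1..m2, f t :=
    (hFTC m1 m2 hm1mem hm2mem (le_of_lt hm1m2)).symm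
  rw [div_eq_mul_one_div, mul_comm]
  apply mul_le_mul_of_nonneg_left _ (by positivity)
  have : (1 / 3) * F x - (8 / 3) * F m1 + (8 / 3) * F m2 - (1 / 3) * F y
      = (8 / 3) * (F m2 - F m1) - (1 / 3) * (F y - F x) := by ring
  rw [this, e1, e2]
  have h2I : 2 * (∫ t in m1..m2, f t) ≤ ∫ t in x..y, f t := by
    rw [hsplit]; linarith
  linarith
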